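/- Let γ be the 6×6 complex matrix with entries γ₁₃ = γ₂₄ = γ₃₅ = γ₄₆ = γ₆₁ = 1, γ₅₂ = −1, and all other entries 0. For all complex numbers u₁, u₂, u₃ of absolute value 1, the characteristic polynomial of D(u₁,u₂,u₃)·γ³ equals (X² + 1)³, where D(u₁,u₂,u₃) = diag(u₁, ū₁, u₂, ū₂, u₃, ū₃). -/

import Mathlib

open Matrix Polynomial

lemma cons_val_five' {α : Type*} (x : α) (u : Fin 5 → α) : vecCons x u 5 = u 4 := rfl

lemma charpoly_rot (u v : ℂ) (h : u * v = 1) :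
    (!![0, -u; v, 0] : Matrix (Fin 2) (Fin 2) ℂ).charpoly = X ^ 2 + 1 := by
  rw [Matrix.charpoly, Matrix.det_fin_two]
  simp [charmatrix_apply]
  rw [← C_mul, h, C_1]
  ring

lemma mul_conj_of_abs_one (u : ℂ) (h : ‖u‖ = 1) : u * starRingEnd ℂ u = 1 := by
  rw [Complex.mul_conj, Complex.normSq_eq_norm_sq, h]
  norm_num

set_option maxHeartbeats 2000000 in
/-- For `u₁, u₂, u₃` on the unit circle, the characteristic polynomial of
`D(u₁,u₂,u₃)·γ³` is `(X² + 1)³`. -/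
theorem charpoly_component_three (u₁ u₂ u₃ : ℂ)
    (h₁ : ‖u₁‖ = 1) (h₂ : ‖u₂‖ = 1) (h₃ : ‖u₃‖ = 1) :
    let γ : Matrix (Fin 6) (Fin 6) ℂ :=
      !![0, 0, 1, 0, 0, 0;
         0, 0, 0, 1, 0, 0;
         0, 0, 0, 0, 1, 0;
         0, 0, 0, 0, 0, 1;
         0, -1, 0, 0, 0, 0;
         1, 0, 0, 0, 0, 0]
    let D : Matrix (Fin 6) (Fin 6) ℂ :=
      Matrix.diagonal ![u₁, starRingEnd ℂ u₁, u₂, starRingEnd ℂ u₂, u₃, starRingEnd ℂ u₃]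
    (D * γ ^ 3).charpoly = (X ^ 2 + 1) ^ 3 := by
  intro γ D
  have hM : D * γ ^ 3 =
      !![0, -u₁, 0, 0, 0, 0;
         starRingEnd ℂ u₁, 0, 0, 0, 0, 0;
         0, 0, 0, -u₂, 0, 0;
         0, 0, starRingEnd ℂ u₂, 0, 0, 0;
         0, 0, 0, 0, 0, -u₃;
         0, 0, 0, 0, starRingEnd ℂ u₃, 0] := by
    ext i j
    fin_cases i <;> fin_cases j <;>
      simp [γ, D, pow_succ, Matrix.mul_apply, Fin.sum_univ_succ, Matrix.diagonal,
        Matrix.vecHead, Matrix.vecTail, cons_val_five']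
  have hB : (!![0, -u₁, 0, 0, 0, 0;
         starRingEnd ℂ u₁, 0, 0, 0, 0, 0;
         0, 0, 0, -u₂, 0, 0;
         0, 0, starRingEnd ℂ u₂, 0, 0, 0;
         0, 0, 0, 0, 0, -u₃;
         0, 0, 0, 0, starRingEnd ℂ u₃, 0] : Matrix (Fin 6) (Fin 6) ℂ) =
      Matrix.reindex finSumFinEquiv finSumFinEquiv
        (Matrix.fromBlocks !![0, -u₁; starRingEnd ℂ u₁, 0] 0 0
          (Matrix.reindex finSumFinEquiv finSumFinEquiv
            (Matrix.fromBlocks !![0, -u₂; starRingEnd ℂ u₂, 0] 0 0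
              !![0, -u₃; starRingEnd ℂ u₃, 0]))) := by
    ext i j
    fin_cases i <;> fin_cases j <;> rfl
  rw [hM, hB, Matrix.charpoly_reindex, Matrix.charpoly_fromBlocks_zero₁₂,
    Matrix.charpoly_reindex, Matrix.charpoly_fromBlocks_zero₁₂,
    charpoly_rot u₁ _ (mul_conj_of_abs_one u₁ h₁),
    charpoly_rot u₂ _ (mul_conj_of_abs_one u₂ h₂),
    charpoly_rot u₃ _ (mul_conj_of_abs_one u₃ h₃)]
  ring
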